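/- For weak compositions a, b of r of length k, the coloring map κ_{a,b} (which colors unbarred elements according to a and barred elements according to b) induces a bijection between the set of orbits of set partitions of [r] ∪ {1̄,…,r̄} under the action of S_a × S_b and the set of multiset partitions with unbarred-element multiplicities given by a and barred-element multiplicities given by b. -/
import Mathlib


open Finset

variable {r k : ℕ}

/-- The coloring map `κ_{a,b}` on the two-row alphabet `[r] ∪ [r̄]`:
unbarred elements (`Sum.inl`) are colored by `f` and barred elements (`Sum.inr`) by `g`. -/
def colorOf (f g : Fin r → Fin k) : Fin r ⊕ Fin r → Fin k ⊕ Fin k := Sum.map f g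

/-- The multiset partition `κ_{a,b}(π)` obtained by coloring all elements of the set
partition `π ∈ Π_{2(r)}`. -/
def coloredP (f g : Fin r → Fin k) (P : Finpartition (univ : Finset (Fin r ⊕ Fin r))) :
    Multiset (Multiset (Fin k ⊕ Fin k)) :=
  P.parts.val.map fun B => B.val.map (colorOf f g)

/-- `Q` is obtained from `P` by relabeling unbarred elements by `σ` and barred elements
by `τ`. -/
def relabeled (σ τ : Equiv.Perm (Fin r))
    (P Q : Finpartition (univ : Finset (Fin r ⊕ Fin r))) : Prop :=
  Q.parts = P.parts.image fun B => B.image (Sum.map ⇑σ ⇑τ)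

-- membership in sum of multisets
lemma memSum {α : Type*} {a : α} {S : Multiset (Multiset α)} :
    a ∈ S.sum ↔ ∃ s ∈ S, a ∈ s := Multiset.mem_join

-- L0: block-level color-preserving bijection
lemma L0 {X C : Type*} [DecidableEq X] (c : X → C) :
    ∀ n (A B : Finset X), A.card = n → A.val.map c = B.val.map c →
      ∃ e : X → X, (∀ x ∈ A, c (e x) = c x) ∧ Set.InjOn e ↑A ∧ A.image e = B := by
  intro n
  induction n with
  | zero =>
    intro A B hA h
    rw [Finset.card_eq_zero] at hA
    subst hA
    have : B = ∅ := by
      have := congrArg Multiset.card h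
      simpa [Finset.card_eq_zero, ← Finset.card_def] using this.symm
    subst this
    exact ⟨id, by simp, by simp [Set.injOn_empty], by simp⟩
  | succ n ih =>
    intro A B hA h
    obtain ⟨a, ha⟩ : A.Nonempty := Finset.card_pos.mp (by omega)
    have hca : c a ∈ B.val.map c := by
      rw [← h]; exact Multiset.mem_map_of_mem c ha
    obtain ⟨b, hb, hcb⟩ := Multiset.mem_map.mp hca
    have hbB : b ∈ B := hb
    have hAv : A.val = a ::ₘ (A.erase a).val := by
      rw [Finset.erase_val]; exact (Multiset.cons_erase ha).symm
    have hBv : B.val = b ::ₘ (B.erase b).val := by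
      rw [Finset.erase_val]; exact (Multiset.cons_erase hbB).symm
    have h' : (A.erase a).val.map c = (B.erase b).val.map c := by
      have h1 : Multiset.map c A.val = c a ::ₘ Multiset.map c (A.erase a).val := by
        rw [hAv, Multiset.map_cons]
      have h2 : Multiset.map c B.val = c a ::ₘ Multiset.map c (B.erase b).val := by
        rw [hBv, Multiset.map_cons, hcb]
      exact (Multiset.cons_inj_right _).mp (h1.symm.trans (h.trans h2))
    obtain ⟨e', he'c, he'i, he'im⟩ := ih (A.erase a) (B.erase b)
      (by rw [Finset.card_erase_of_mem ha, hA]; rfl) h'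
    refine ⟨fun x => if x = a then b else e' x, ?_, ?_, ?_⟩
    · intro x hx
      by_cases hxa : x = a
      · subst hxa; simp [hcb]
      · simp only [if_neg hxa]; exact he'c x (Finset.mem_erase.mpr ⟨hxa, hx⟩)
    · intro x hx y hy hxy
      by_cases hxa : x = a <;> by_cases hya : y = a
      · rw [hxa, hya]
      · exfalso
        simp only [hxa, hya, if_true, if_false, eq_self_iff_true] at hxy
        have : e' y ∈ (B.erase b) := by
          rw [← he'im]; exact Finset.mem_image_of_mem e' (Finset.mem_erase.mpr ⟨hya, hy⟩)
        rw [← hxy] at this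
        exact (Finset.mem_erase.mp this).1 rfl
      · exfalso
        simp only [hxa, hya, if_true, if_false, eq_self_iff_true] at hxy
        have : e' x ∈ (B.erase b) := by
          rw [← he'im]; exact Finset.mem_image_of_mem e' (Finset.mem_erase.mpr ⟨hxa, hx⟩)
        rw [hxy] at this
        exact (Finset.mem_erase.mp this).1 rfl
      · simp only [if_neg hxa, if_neg hya] at hxy
        exact he'i (Finset.mem_erase.mpr ⟨hxa, hx⟩) (Finset.mem_erase.mpr ⟨hya, hy⟩) hxy
    · have hA' : A = insert a (A.erase a) := (Finset.insert_erase ha).symm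
      rw [hA', Finset.image_insert, if_pos rfl]
      have : (A.erase a).image (fun x => if x = a then b else e' x) = (A.erase a).image e' := by
        apply Finset.image_congr
        intro x hx
        simp [(Finset.mem_erase.mp hx).1]
      rw [this, he'im, Finset.insert_erase hbB]

lemma L1 {X C : Type*} [DecidableEq X] (c : X → C) {s t : Multiset (Finset X)}
    (hrel : Multiset.Rel (fun A B => A.val.map c = B.val.map c) s t)
    (hs : ((s.map Finset.val).sum).Nodup) (ht : ((t.map Finset.val).sum).Nodup) :
    ∃ e : X → X, t = s.map (Finset.image e) ∧
      (∀ x ∈ (s.map Finset.val).sum, c (e x) = c x) ∧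
      Set.InjOn e {x | x ∈ (s.map Finset.val).sum} ∧
      ∀ x ∈ (s.map Finset.val).sum, e x ∈ (t.map Finset.val).sum := by
  induction hrel with
  | zero =>
    refine ⟨id, by simp, by simp, ?_, by simp⟩
    intro x hx
    simp at hx
  | @cons A B s₀ t₀ hAB hrel' ih =>
    rw [Multiset.map_cons, Multiset.sum_cons, Multiset.nodup_add] at hs ht
    obtain ⟨hAnd, hs₀, hdisjA'⟩ := hs
    obtain ⟨hBnd, ht₀, hdisjB'⟩ := ht
    have hdisjA : ∀ {x}, x ∈ A.val → x ∈ (Multiset.map Finset.val s₀).sum → False :=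
      fun hx hy => Multiset.disjoint_left.mp hdisjA' hx hy
    have hdisjB : ∀ {x}, x ∈ B.val → x ∈ (Multiset.map Finset.val t₀).sum → False :=
      fun hx hy => Multiset.disjoint_left.mp hdisjB' hx hy
    obtain ⟨e', he't, he'c, he'i, he'mem⟩ := ih hs₀ ht₀
    obtain ⟨eAB, heABc, heABi, heABim⟩ := L0 c A.card A B rfl hAB
    refine ⟨fun x => if x ∈ A then eAB x else e' x, ?_, ?_, ?_, ?_⟩
    · rw [Multiset.map_cons]
      congr 1
      · rw [← heABim]
        exact (Finset.image_congr (fun x hx => by simp [Finset.mem_coe.mp hx])).symm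
      · rw [he't]
        refine Multiset.map_congr rfl (fun A' hA' => ?_)
        refine Finset.image_congr (fun x hx => ?_)
        have hxs : x ∈ (Multiset.map Finset.val s₀).sum :=
          memSum.mpr ⟨A'.val, Multiset.mem_map_of_mem _ hA', hx⟩
        have hxA : x ∉ A := fun hxA => hdisjA (Finset.mem_val.mpr hxA) hxs
        simp [hxA]
    · intro x hx
      rw [Multiset.map_cons, Multiset.sum_cons] at hx
      rcases Multiset.mem_add.mp hx with hx | hx
      · have hxA : x ∈ A := hx
        simp only [if_pos hxA]
        exact heABc x hxA
      · have hxA : x ∉ A := fun hxA => hdisjA (Finset.mem_val.mpr hxA) hx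
        simp only [if_neg hxA]
        exact he'c x hx
    · intro x hx y hy hxy
      simp only [Set.mem_setOf_eq, Multiset.map_cons, Multiset.sum_cons, Multiset.mem_add]
        at hx hy
      have memB : ∀ z, z ∈ A → eAB z ∈ B := fun z hz => by
        rw [← heABim]; exact Finset.mem_image_of_mem _ hz
      have memT : ∀ z, z ∉ A → z ∈ (Multiset.map Finset.val s₀).sum →
          e' z ∈ (Multiset.map Finset.val t₀).sum := fun z _ hz => he'mem z hz
      rcases hx with hx | hx <;> rcases hy with hy | hy
      · exact heABi hx hy (by simpa [Finset.mem_val.mp hx, Finset.mem_val.mp hy] using hxy)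
      · exfalso
        have hyA : y ∉ A := fun h => hdisjA (Finset.mem_val.mpr h) hy
        have h1 : eAB x ∈ B := memB x hx
        have h2 : e' y ∈ (Multiset.map Finset.val t₀).sum := memT y hyA hy
        simp only [if_pos (Finset.mem_val.mp hx), if_neg hyA] at hxy
        rw [hxy] at h1
        exact hdisjB (Finset.mem_val.mpr h1) h2
      · exfalso
        have hxA : x ∉ A := fun h => hdisjA (Finset.mem_val.mpr h) hx
        have h1 : eAB y ∈ B := memB y hy
        have h2 : e' x ∈ (Multiset.map Finset.val t₀).sum := memT x hxA hx
        simp only [if_neg hxA, if_pos (Finset.mem_val.mp hy)] at hxy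
        rw [← hxy] at h1
        exact hdisjB (Finset.mem_val.mpr h1) h2
      · have hxA : x ∉ A := fun h => hdisjA (Finset.mem_val.mpr h) hx
        have hyA : y ∉ A := fun h => hdisjA (Finset.mem_val.mpr h) hy
        simp only [if_neg hxA, if_neg hyA] at hxy
        exact he'i hx hy hxy
    · intro x hx
      rw [Multiset.map_cons, Multiset.sum_cons] at hx
      rw [Multiset.map_cons, Multiset.sum_cons]
      rcases Multiset.mem_add.mp hx with hx | hx
      · have hxA : x ∈ A := hx
        simp only [if_pos hxA]
        refine Multiset.mem_add.mpr (Or.inl ?_)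
        have : eAB x ∈ B := by rw [← heABim]; exact Finset.mem_image_of_mem _ hxA
        exact this
      · have hxA : x ∉ A := fun h => hdisjA (Finset.mem_val.mpr h) hx
        simp only [if_neg hxA]
        exact Multiset.mem_add.mpr (Or.inr (he'mem x hx))

lemma L5 {X : Type*} [DecidableEq X] {S : Finset X} (P : Finpartition S) :
    (P.parts.val.map Finset.val).sum = S.val := by
  refine Multiset.ext.mpr fun x => ?_
  rw [Multiset.count_sum]
  by_cases hx : x ∈ S
  · obtain ⟨t, ht, hxt⟩ := P.exists_mem hx
    have hts : P.parts.val = t ::ₘ P.parts.val.erase t := (Multiset.cons_erase ht).symm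
    rw [hts, Multiset.map_cons, Multiset.sum_cons]
    have h1 : Multiset.count x t.val = 1 :=
      Multiset.count_eq_one_of_mem t.nodup hxt
    have h0 : (Multiset.map (fun B => Multiset.count x B.val) (P.parts.val.erase t)).sum = 0 := by
      apply Multiset.sum_eq_zero
      intro n hn
      obtain ⟨B, hB, rfl⟩ := Multiset.mem_map.mp hn
      have hBt : B ≠ t ∧ B ∈ P.parts.val := (P.parts.nodup.mem_erase_iff).mp hB
      apply Multiset.count_eq_zero_of_notMem
      intro hxB
      exact hBt.1 (P.eq_of_mem_parts hBt.2 ht hxB hxt)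
    rw [h1, h0, Multiset.count_eq_one_of_mem S.nodup hx]
  · rw [Multiset.count_eq_zero_of_notMem (fun h => hx (Finset.mem_val.mp h))]
    apply Multiset.sum_eq_zero
    intro n hn
    obtain ⟨B, hB, rfl⟩ := Multiset.mem_map.mp hn
    apply Multiset.count_eq_zero_of_notMem
    intro hxB
    exact hx (Finset.mem_of_subset (P.le hB) hxB)

lemma disj_of_nodup_sum {X : Type*} [DecidableEq X] {s : Multiset (Finset X)}
    (h : ((s.map Finset.val).sum).Nodup) :
    ∀ B ∈ s, ∀ B' ∈ s, B ≠ B' → Disjoint B B' := by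
  induction s using Multiset.induction_on with
  | empty => simp
  | cons A s' ih =>
    rw [Multiset.map_cons, Multiset.sum_cons, Multiset.nodup_add] at h
    obtain ⟨h1, h2, h3⟩ := h
    have hd : ∀ B' ∈ s', Disjoint A B' := by
      intro B' hB'
      rw [Finset.disjoint_left]
      intro x hxA hxB'
      exact Multiset.disjoint_left.mp h3 (Finset.mem_val.mpr hxA)
        (memSum.mpr ⟨B'.val, Multiset.mem_map_of_mem _ hB', Finset.mem_val.mpr hxB'⟩)
    intro B hB B' hB' hne
    rcases Multiset.mem_cons.mp hB with e1 | e1 <;> rcases Multiset.mem_cons.mp hB' with e2 | e2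
    · exact absurd (e1.trans e2.symm) hne
    · subst e1; exact hd B' e2
    · subst e2; exact (hd B e1).symm
    · exact ih h2 B e1 B' e2 hne

lemma nodup_blocks {X : Type*} [DecidableEq X] {s : Multiset (Finset X)}
    (h : ((s.map Finset.val).sum).Nodup) (hne : ∀ B ∈ s, B ≠ ∅) : s.Nodup := by
  induction s using Multiset.induction_on with
  | empty => simp
  | cons A s' ih =>
    rw [Multiset.map_cons, Multiset.sum_cons, Multiset.nodup_add] at h
    obtain ⟨h1, h2, h3⟩ := h
    refine Multiset.nodup_cons.mpr ⟨?_, ih h2 (fun B hB => hne B (Multiset.mem_cons_of_mem hB))⟩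
    intro hA
    obtain ⟨x, hx⟩ := Finset.nonempty_iff_ne_empty.mpr (hne A (Multiset.mem_cons_self A s'))
    exact Multiset.disjoint_left.mp h3 (Finset.mem_val.mpr hx)
      (memSum.mpr ⟨A.val, Multiset.mem_map_of_mem _ hA, Finset.mem_val.mpr hx⟩)

lemma L3 {X C : Type*} [DecidableEq X] (f : X → C) (m : Multiset C) :
    ∀ s : Multiset X, m ≤ s.map f → ∃ u, u ≤ s ∧ u.map f = m := by
  induction m using Multiset.induction_on with
  | empty => exact fun s _ => ⟨0, Multiset.zero_le s, rfl⟩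
  | cons a m' ih =>
    intro s h
    have ha : a ∈ s.map f := Multiset.mem_of_le h (Multiset.mem_cons_self a m')
    obtain ⟨x, hx, hfx⟩ := Multiset.mem_map.mp ha
    have hs : s.map f = a ::ₘ (s.erase x).map f := by
      rw [← hfx]
      conv_lhs => rw [← Multiset.cons_erase hx]
      rw [Multiset.map_cons]
    rw [hs] at h
    have h' : m' ≤ (s.erase x).map f := (Multiset.cons_le_cons_iff a).mp h
    obtain ⟨u', hu', hmap⟩ := ih (s.erase x) h'
    refine ⟨x ::ₘ u', ?_, by rw [Multiset.map_cons, hfx, hmap]⟩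
    rw [← Multiset.cons_erase hx]
    exact Multiset.cons_le_cons x hu'

lemma L2 {X C : Type*} [DecidableEq X] (c : X → C) (M : Multiset (Multiset C)) :
    ∀ S : Finset X, M.sum = S.val.map c →
      ∃ s : Multiset (Finset X),
        s.map (fun B => B.val.map c) = M ∧ (s.map Finset.val).sum = S.val := by
  induction M using Multiset.induction_on with
  | empty =>
    intro S h
    rw [Multiset.sum_zero] at h
    have hS : S.val = 0 := Multiset.map_eq_zero.mp h.symm
    exact ⟨0, by simp, by simp [hS]⟩
  | cons m M' ih =>
    intro S h
    rw [Multiset.sum_cons] at h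
    have hm : m ≤ S.val.map c := h ▸ Multiset.le_add_right m M'.sum
    obtain ⟨u, hu, hum⟩ := L3 c m S.val hm
    have hund : u.Nodup := Multiset.nodup_of_le hu S.nodup
    have hS'nd : (S.val - u).Nodup := Multiset.nodup_of_le (Multiset.sub_le_self _ _) S.nodup
    set S' : Finset X := ⟨S.val - u, hS'nd⟩ with hS'def
    have hS' : u + S'.val = S.val := add_tsub_cancel_of_le hu
    have h' : M'.sum = S'.val.map c := by
      have hh : m + M'.sum = m + S'.val.map c := by
        calc m + M'.sum = S.val.map c := h
          _ = (u + S'.val).map c := by rw [hS']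
          _ = m + S'.val.map c := by rw [Multiset.map_add, hum]
      exact add_left_cancel hh
    obtain ⟨s', hs'1, hs'2⟩ := ih S' h'
    refine ⟨⟨u, hund⟩ ::ₘ s', ?_, ?_⟩
    · rw [Multiset.map_cons, hs'1]
      congr 1
    · rw [Multiset.map_cons, Multiset.sum_cons, hs'2]
      exact hS'

/-- For weak compositions `a, b` of `r` of length `k` (encoded by their
monotone coloring maps `f, g : Fin r → Fin k`), the coloring map `κ_{a,b}` induces a
bijection between orbits of set partitions of `[r] ∪ [r̄]` under `S_a × S_b` and multiset
partitions whose unbarred and barred multiplicities are given by `a` and `b`: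
two set partitions have the same colored image iff they lie in the same `S_a × S_b`-orbit,
and every such multiset partition is a colored image. -/
theorem stmt2 (f g : Fin r → Fin k) (hf : Monotone f) (hg : Monotone g) :
    (∀ P Q : Finpartition (univ : Finset (Fin r ⊕ Fin r)),
        coloredP f g P = coloredP f g Q ↔
          ∃ σ τ : Equiv.Perm (Fin r), f ∘ ⇑σ = f ∧ g ∘ ⇑τ = g ∧ relabeled σ τ P Q) ∧
    (∀ M : Multiset (Multiset (Fin k ⊕ Fin k)),
        0 ∉ M → M.sum = (univ : Finset (Fin r ⊕ Fin r)).val.map (colorOf f g) →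
          ∃ P : Finpartition (univ : Finset (Fin r ⊕ Fin r)), coloredP f g P = M) := by
  constructor
  · intro P Q
    constructor
    · intro h
      unfold coloredP at h
      have hrel : Multiset.Rel
          (fun A B => A.val.map (colorOf f g) = B.val.map (colorOf f g))
          P.parts.val Q.parts.val := Multiset.rel_map.mp (Multiset.rel_eq.mpr h)
      have hPnd : ((P.parts.val.map Finset.val).sum).Nodup := by
        rw [L5 P]; exact Finset.univ.nodup
      have hQnd : ((Q.parts.val.map Finset.val).sum).Nodup := by
        rw [L5 Q]; exact Finset.univ.nodup
      obtain ⟨e, him, hcol, hinj, _⟩ := L1 (colorOf f g) hrel hPnd hQnd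
      have hU : ∀ x, x ∈ (P.parts.val.map Finset.val).sum := by
        intro x; rw [L5 P]; exact Finset.mem_univ x
      have hinj' : Function.Injective e := fun x y hxy => hinj (hU x) (hU y) hxy
      have hcol' : ∀ x, colorOf f g (e x) = colorOf f g x := fun x => hcol x (hU x)
      have hinl : ∀ x : Fin r, ∃ y : Fin r, e (Sum.inl x) = Sum.inl y := by
        intro x
        rcases hz : e (Sum.inl x) with y | y
        · exact ⟨y, rfl⟩
        · have hh := hcol' (Sum.inl x); rw [hz] at hh; simp [colorOf] at hh
      have hinr : ∀ x : Fin r, ∃ y : Fin r, e (Sum.inr x) = Sum.inr y := by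
        intro x
        rcases hz : e (Sum.inr x) with y | y
        · have hh := hcol' (Sum.inr x); rw [hz] at hh; simp [colorOf] at hh
        · exact ⟨y, rfl⟩
      choose σ₀ hσ₀ using hinl
      choose τ₀ hτ₀ using hinr
      have hfσ : ∀ x, f (σ₀ x) = f x := by
        intro x
        have hh := hcol' (Sum.inl x)
        rw [hσ₀ x] at hh
        simpa [colorOf] using hh
      have hgτ : ∀ x, g (τ₀ x) = g x := by
        intro x
        have hh := hcol' (Sum.inr x)
        rw [hτ₀ x] at hh
        simpa [colorOf] using hh
      have hσinj : Function.Injective σ₀ := by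
        intro x y hxy
        have hh : e (Sum.inl x) = e (Sum.inl y) := by rw [hσ₀, hσ₀, hxy]
        exact Sum.inl_injective (hinj' hh)
      have hτinj : Function.Injective τ₀ := by
        intro x y hxy
        have hh : e (Sum.inr x) = e (Sum.inr y) := by rw [hτ₀, hτ₀, hxy]
        exact Sum.inr_injective (hinj' hh)
      refine ⟨Equiv.ofBijective σ₀ (Finite.injective_iff_bijective.mp hσinj),
              Equiv.ofBijective τ₀ (Finite.injective_iff_bijective.mp hτinj),
              funext hfσ, funext hgτ, ?_⟩
      have hem : Sum.map σ₀ τ₀ = e := by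
        funext z
        cases z with
        | inl x => rw [Sum.map_inl, hσ₀]
        | inr y => rw [Sum.map_inr, hτ₀]
      show Q.parts = P.parts.image fun B => B.image (Sum.map σ₀ τ₀)
      apply Finset.val_injective.eq_iff.mp
      rw [Finset.image_val]
      have hmq : P.parts.val.map (fun B => B.image (Sum.map σ₀ τ₀)) = Q.parts.val := by
        rw [hem, him]
      rw [hmq, Multiset.dedup_eq_self.mpr Q.parts.nodup]
    · rintro ⟨σ, τ, hfσ, hgτ, hrel⟩
      have hminj : Function.Injective (Sum.map ⇑σ ⇑τ) := (Equiv.sumCongr σ τ).injective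
      have hcm : colorOf f g ∘ Sum.map ⇑σ ⇑τ = colorOf f g := by
        funext z
        cases z with
        | inl x =>
          show Sum.inl (f (σ x)) = Sum.inl (f x)
          rw [show f (σ x) = f x from congrFun hfσ x]
        | inr y =>
          show Sum.inr (g (τ y)) = Sum.inr (g y)
          rw [show g (τ y) = g y from congrFun hgτ y]
      have hQ : Q.parts = P.parts.image fun B => B.image (Sum.map ⇑σ ⇑τ) := hrel
      unfold coloredP
      rw [hQ, Finset.image_val_of_injOn ((Finset.image_injective hminj).injOn)]
      rw [Multiset.map_map]
      refine (Multiset.map_congr rfl fun B _ => ?_).symm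
      show (B.image (Sum.map ⇑σ ⇑τ)).val.map (colorOf f g) = B.val.map (colorOf f g)
      rw [Finset.image_val_of_injOn hminj.injOn, Multiset.map_map, hcm]
  · intro M h0 hsum
    obtain ⟨s, hmap, hsumv⟩ := L2 (colorOf f g) M Finset.univ hsum
    have hne : ∀ B ∈ s, B ≠ ∅ := by
      intro B hB hBe
      apply h0
      rw [← hmap]
      refine Multiset.mem_map.mpr ⟨B, hB, ?_⟩
      rw [hBe]; simp
    have hnodsum : ((s.map Finset.val).sum).Nodup := by
      rw [hsumv]; exact Finset.univ.nodup
    have hnd : s.Nodup := nodup_blocks hnodsum hne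
    refine ⟨⟨⟨s, hnd⟩, ?_, ?_, ?_⟩, ?_⟩
    · apply Finset.supIndep_iff_pairwiseDisjoint.mpr
      intro B hB B' hB' hne'
      exact disj_of_nodup_sum hnodsum B hB B' hB' hne'
    · apply Finset.eq_univ_iff_forall.mpr
      intro x
      have hx : x ∈ (s.map Finset.val).sum := by rw [hsumv]; exact Finset.mem_univ x
      obtain ⟨Bv, hBv, hxB⟩ := memSum.mp hx
      obtain ⟨B, hB, rfl⟩ := Multiset.mem_map.mp hBv
      exact Finset.mem_sup.mpr ⟨B, hB, hxB⟩
    · intro hbot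
      simp only [Finset.bot_eq_empty] at hbot
      exact hne ∅ hbot rfl
    · exact hmap
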